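/- For any real sequence (c_n) with ∑ c_n² = 1 and ∑ n c_n² = N (N > 0), one has ∑_n c_{n+1} c_n √(n+1) ≤ √N, with equality attained by the coherent state coefficients c_n = e^{-N/2} N^{n/2}/√(n!). -/

import Mathlib

/-- Coherent state Fock coefficients with mean photon number N. -/
noncomputable def cohCoeffN (N : ℝ) (n : ℕ) : ℝ :=
  Real.exp (-N / 2) * N ^ ((n : ℝ) / 2) / Real.sqrt (Nat.factorial n)

lemma cohCoeffN_term (N : ℝ) (hN : 0 < N) (n : ℕ) :
    cohCoeffN N (n + 1) * cohCoeffN N n * Real.sqrt (n + 1)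
      = Real.exp (-N) * Real.sqrt N * (N ^ n / n.factorial) := by
  unfold cohCoeffN
  have hfac : Real.sqrt ((n + 1).factorial : ℝ)
      = Real.sqrt ((n : ℝ) + 1) * Real.sqrt (n.factorial : ℝ) := by
    rw [Nat.factorial_succ]
    push_cast
    rw [Real.sqrt_mul (by positivity)]
  have hrpow : N ^ (((n + 1 : ℕ) : ℝ) / 2) * N ^ ((n : ℝ) / 2)
      = N ^ n * Real.sqrt N := by
    rw [← Real.rpow_add hN]
    have : ((n + 1 : ℕ) : ℝ) / 2 + (n : ℝ) / 2 = (n : ℝ) + (1 / 2 : ℝ) := by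
      push_cast; ring
    rw [this, Real.rpow_add hN, Real.rpow_natCast, Real.sqrt_eq_rpow]
  have hsq : Real.sqrt ((n : ℝ) + 1) ≠ 0 := by positivity
  have hfn : Real.sqrt (n.factorial : ℝ) ≠ 0 := by positivity
  have hexp : Real.exp (-N / 2) * Real.exp (-N / 2) = Real.exp (-N) := by
    rw [← Real.exp_add]; ring_nf
  have hmul : Real.sqrt (n.factorial : ℝ) * Real.sqrt (n.factorial : ℝ)
      = (n.factorial : ℝ) := Real.mul_self_sqrt (by positivity)
  rw [hfac]
  push_cast at hrpow
  have key : Real.exp (-N / 2) * N ^ (((n : ℝ) + 1) / 2) * (Real.exp (-N / 2) * N ^ ((n : ℝ) / 2))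
      = Real.exp (-N) * Real.sqrt N * N ^ n := by
    calc Real.exp (-N / 2) * N ^ (((n : ℝ) + 1) / 2) * (Real.exp (-N / 2) * N ^ ((n : ℝ) / 2))
        = (Real.exp (-N / 2) * Real.exp (-N / 2))
            * (N ^ (((n : ℝ) + 1) / 2) * N ^ ((n : ℝ) / 2)) := by ring
      _ = Real.exp (-N) * Real.sqrt N * N ^ n := by rw [hexp, hrpow]; ring
  field_simp
  rw [Real.sq_sqrt (by positivity)]
  push_cast
  rw [neg_div] at key
  linear_combination (n.factorial : ℝ) * key

/-- Among real sequences with unit norm and mean photon number N > 0,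
    γ = ∑ c_{n+1} c_n √(n+1) is at most √N, with equality for the coherent state. -/
theorem gamma_le_sqrt_energy (N : ℝ) (hN : 0 < N) (c : ℕ → ℝ)
    (hsq : Summable fun n : ℕ => (c n) ^ 2)
    (hen : Summable fun n : ℕ => (n : ℝ) * (c n) ^ 2)
    (hnorm : (∑' n : ℕ, (c n) ^ 2) = 1)
    (henergy : (∑' n : ℕ, (n : ℝ) * (c n) ^ 2) = N)
    (hγ : Summable fun n : ℕ => c (n + 1) * c n * Real.sqrt (n + 1)) :
    (∑' n : ℕ, c (n + 1) * c n * Real.sqrt (n + 1)) ≤ Real.sqrt N ∧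
    (∑' n : ℕ, cohCoeffN N (n + 1) * cohCoeffN N n * Real.sqrt (n + 1))
      = Real.sqrt N := by
  constructor
  · -- Cauchy–Schwarz
    have hshift : Summable fun n : ℕ => ((n : ℝ) + 1) * (c (n + 1)) ^ 2 := by
      have := (summable_nat_add_iff 1).mpr hen
      simpa using this
    have htshift : (∑' n : ℕ, ((n : ℝ) + 1) * (c (n + 1)) ^ 2) = N := by
      have h0 : (∑' n : ℕ, (n : ℝ) * (c n) ^ 2)
          = ((0 : ℕ) : ℝ) * (c 0) ^ 2 + ∑' n : ℕ, ((n + 1 : ℕ) : ℝ) * (c (n + 1)) ^ 2 :=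
        Summable.tsum_eq_zero_add hen
      simp only [Nat.cast_zero, zero_mul, zero_add, Nat.cast_add, Nat.cast_one] at h0
      rw [← henergy, h0]
    -- partial sums bounded by √N
    have key : ∀ m : ℕ, (∑ n ∈ Finset.range m, c (n + 1) * c n * Real.sqrt (n + 1))
        ≤ Real.sqrt N := by
      intro m
      set f : ℕ → ℝ := fun n => c (n + 1) * Real.sqrt ((n : ℝ) + 1)
      have hfsq : ∀ n : ℕ, f n ^ 2 = ((n : ℝ) + 1) * (c (n + 1)) ^ 2 := by
        intro n
        simp only [f, mul_pow, Real.sq_sqrt (by positivity : (0:ℝ) ≤ (n : ℝ) + 1)]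
        ring
      have hCS := Finset.sum_mul_sq_le_sq_mul_sq (Finset.range m) f c
      have hA : (∑ n ∈ Finset.range m, f n ^ 2) ≤ N := by
        rw [← htshift]
        calc (∑ n ∈ Finset.range m, f n ^ 2)
            = ∑ n ∈ Finset.range m, ((n : ℝ) + 1) * (c (n + 1)) ^ 2 :=
              Finset.sum_congr rfl fun n _ => hfsq n
          _ ≤ ∑' n : ℕ, ((n : ℝ) + 1) * (c (n + 1)) ^ 2 :=
              Summable.sum_le_tsum _ (fun n _ => by positivity) hshift
      have hB : (∑ n ∈ Finset.range m, (c n) ^ 2) ≤ 1 := by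
        rw [← hnorm]
        exact Summable.sum_le_tsum _ (fun n _ => by positivity) hsq
      have hAnn : (0:ℝ) ≤ ∑ n ∈ Finset.range m, f n ^ 2 :=
        Finset.sum_nonneg fun n _ => sq_nonneg _
      have hsum_eq : (∑ n ∈ Finset.range m, c (n + 1) * c n * Real.sqrt (n + 1))
          = ∑ n ∈ Finset.range m, f n * c n := by
        apply Finset.sum_congr rfl
        intro n _
        simp only [f]
        ring
      rw [hsum_eq]
      have hsq2 : (∑ n ∈ Finset.range m, f n * c n) ^ 2 ≤ N * 1 := by
        calc (∑ n ∈ Finset.range m, f n * c n) ^ 2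
            ≤ (∑ n ∈ Finset.range m, f n ^ 2) * ∑ n ∈ Finset.range m, (c n) ^ 2 := hCS
          _ ≤ N * 1 := by
              apply mul_le_mul hA hB (Finset.sum_nonneg fun n _ => sq_nonneg _) hN.le
      calc (∑ n ∈ Finset.range m, f n * c n)
          ≤ |∑ n ∈ Finset.range m, f n * c n| := le_abs_self _
        _ = Real.sqrt ((∑ n ∈ Finset.range m, f n * c n) ^ 2) := (Real.sqrt_sq_eq_abs _).symm
        _ ≤ Real.sqrt N := by
            apply Real.sqrt_le_sqrt; linarith
    have htend := hγ.hasSum.tendsto_sum_nat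
    exact le_of_tendsto htend (Filter.Eventually.of_forall key)
  · -- coherent state equality
    have hterm : ∀ n : ℕ, cohCoeffN N (n + 1) * cohCoeffN N n * Real.sqrt (n + 1)
        = Real.exp (-N) * Real.sqrt N * (N ^ n / n.factorial) :=
      cohCoeffN_term N hN
    rw [tsum_congr hterm]
    have hsum : Summable fun n : ℕ => N ^ n / (n.factorial : ℝ) :=
      Real.summable_pow_div_factorial N
    rw [tsum_mul_left]
    have hexp : (∑' n : ℕ, N ^ n / (n.factorial : ℝ)) = Real.exp N := by
      rw [Real.exp_eq_exp_ℝ, NormedSpace.exp_eq_tsum_div]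
    rw [hexp, mul_comm (Real.exp (-N)) (Real.sqrt N), mul_assoc, ← Real.exp_add]
    simp
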